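/- For every positive integer s, there exists n = n(s) such that every bipartite graph G = (A, B, E) with |A| ≥ n and |B| ≥ n contains subsets A' ⊆ A and B' ⊆ B with |A'| = |B'| = s such that either every vertex of A' is adjacent to every vertex of B', or no vertex of A' is adjacent to any vertex of B'. -/

import Mathlib

lemma bipartite_ramsey_aux (s : ℕ) : ∀ (t : ℕ) (A B : Type) (E : A → B → Prop)
    (SA : Finset A) (SB : Finset B), t ≤ SA.card → s * 2 ^ t ≤ SB.card →
    ∃ f : Finset A, f ⊆ SA ∧ f.card = t ∧ ∃ g : Finset B, g ⊆ SB ∧ s ≤ g.card ∧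
      ∀ a ∈ f, (∀ b ∈ g, E a b) ∨ (∀ b ∈ g, ¬ E a b) := by
  intro t
  induction t with
  | zero =>
    intro A B E SA SB _ hB
    exact ⟨∅, Finset.empty_subset _, rfl, SB, Finset.Subset.refl _, by simpa using hB,
      by simp⟩
  | succ t ih =>
    intro A B E SA SB hA hB
    classical
    have hpos : 0 < SA.card := lt_of_lt_of_le (Nat.succ_pos t) hA
    obtain ⟨a, ha⟩ := Finset.card_pos.mp hpos
    set P := SB.filter (fun b => E a b) with hP
    set N := SB.filter (fun b => ¬ E a b) with hN
    have hsum : P.card + N.card = SB.card := Finset.card_filter_add_card_filter_not _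
    have hcardA : t ≤ (SA.erase a).card := by
      rw [Finset.card_erase_of_mem ha]; omega
    have h2 : s * 2 ^ (t + 1) = s * 2 ^ t + s * 2 ^ t := by ring
    have hor : s * 2 ^ t ≤ P.card ∨ s * 2 ^ t ≤ N.card := by omega
    rcases hor with h | h
    · obtain ⟨f, hfs, hfc, g, hgs, hgc, hprop⟩ := ih A B E (SA.erase a) P hcardA h
      refine ⟨insert a f, ?_, ?_, g, hgs.trans (Finset.filter_subset _ _), hgc, ?_⟩
      · exact Finset.insert_subset ha (hfs.trans (Finset.erase_subset _ _))
      · rw [Finset.card_insert_of_notMem (fun h => (Finset.mem_erase.mp (hfs h)).1 rfl), hfc]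
      · intro x hx
        rcases Finset.mem_insert.mp hx with rfl | hx
        · exact Or.inl (fun b hb => (Finset.mem_filter.mp (hgs hb)).2)
        · exact hprop x hx
    · obtain ⟨f, hfs, hfc, g, hgs, hgc, hprop⟩ := ih A B E (SA.erase a) N hcardA h
      refine ⟨insert a f, ?_, ?_, g, hgs.trans (Finset.filter_subset _ _), hgc, ?_⟩
      · exact Finset.insert_subset ha (hfs.trans (Finset.erase_subset _ _))
      · rw [Finset.card_insert_of_notMem (fun h => (Finset.mem_erase.mp (hfs h)).1 rfl), hfc]
      · intro x hx
        rcases Finset.mem_insert.mp hx with rfl | hx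
        · exact Or.inr (fun b hb => (Finset.mem_filter.mp (hgs hb)).2)
        · exact hprop x hx

/-- Bipartite Ramsey theorem: for every positive integer `s` there is `n` such that every
bipartite graph with parts of size at least `n` contains either a complete or an empty
`s × s` sub-bipartite-graph. -/
theorem bipartite_ramsey (s : ℕ) (hs : 0 < s) :
    ∃ n : ℕ, ∀ (A B : Type) [Fintype A] [Fintype B] (E : A → B → Prop),
      n ≤ Fintype.card A → n ≤ Fintype.card B →
      ∃ (A' : Finset A) (B' : Finset B), A'.card = s ∧ B'.card = s ∧
        ((∀ a ∈ A', ∀ b ∈ B', E a b) ∨ (∀ a ∈ A', ∀ b ∈ B', ¬ E a b)) := by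
  classical
  refine ⟨2 * s * 2 ^ (2 * s), ?_⟩
  intro A B _ _ E hA hB
  have h1 : 2 * s ≤ Fintype.card A := by
    have : 2 * s ≤ 2 * s * 2 ^ (2 * s) := Nat.le_mul_of_pos_right _ (pow_pos (by norm_num : (0:ℕ) < 2) _)
    omega
  have h2 : s * 2 ^ (2 * s) ≤ Fintype.card B := by nlinarith [pow_pos (show (0:ℕ) < 2 by norm_num) (2 * s)]
  obtain ⟨f, _, hfc, g, _, hgc, hprop⟩ := bipartite_ramsey_aux s (2 * s) A B E
    Finset.univ Finset.univ (by simpa using h1) (by simpa using h2)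
  set f1 := f.filter (fun a => ∀ b ∈ g, E a b) with hf1
  set f2 := f.filter (fun a => ¬ ∀ b ∈ g, E a b) with hf2
  have hsum : f1.card + f2.card = f.card := Finset.card_filter_add_card_filter_not _
  have hor : s ≤ f1.card ∨ s ≤ f2.card := by omega
  obtain ⟨g', hg's, hg'c⟩ := Finset.exists_subset_card_eq (s := g) (n := s) hgc
  rcases hor with h | h
  · obtain ⟨f', hf's, hf'c⟩ := Finset.exists_subset_card_eq (s := f1) (n := s) h
    refine ⟨f', g', hf'c, hg'c, Or.inl ?_⟩
    intro a haf b hbg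
    exact (Finset.mem_filter.mp (hf's haf)).2 b (hg's hbg)
  · obtain ⟨f', hf's, hf'c⟩ := Finset.exists_subset_card_eq (s := f2) (n := s) h
    refine ⟨f', g', hf'c, hg'c, Or.inr ?_⟩
    intro a haf b hbg
    have hmem := Finset.mem_filter.mp (hf's haf)
    rcases hprop a hmem.1 with hall | hnone
    · exact absurd hall hmem.2
    · exact hnone b (hg's hbg)
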